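/- Let G = (V, E) be a finite simple graph and let A ⊆ V. Then G is collapsible onto A if and only if for every pair of non-adjacent vertices x, y ∈ A, every minimal xy-separator in G is contained in A. (Theorem 1 of the paper.) -/

import Mathlib

/-- `S` separates `X` from `Y` in `G`: every path in `G` from a vertex of `X`
to a vertex of `Y` contains a vertex of `S`. -/
def Separates {V : Type*} (G : SimpleGraph V) (X Y S : Set V) : Prop :=
  ∀ ⦃a b : V⦄, a ∈ X → b ∈ Y → ∀ p : G.Walk a b, p.IsPath → ∃ s ∈ S, s ∈ p.support

/-- `S` is an `xy`-separator in `G`: `S ⊆ V \ {x, y}` and `S` separates `{x}` from `{y}`. -/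
def IsSeparator {V : Type*} (G : SimpleGraph V) (x y : V) (S : Set V) : Prop :=
  S ⊆ ({x, y} : Set V)ᶜ ∧ Separates G {x} {y} S

/-- `S` is a minimal `xy`-separator in `G`: it is an `xy`-separator and no proper
subset of `S` is an `xy`-separator. -/
def IsMinSeparator {V : Type*} (G : SimpleGraph V) (x y : V) (S : Set V) : Prop :=
  IsSeparator G x y S ∧ ∀ T ⊂ S, ¬ IsSeparator G x y T

/-- `G` is collapsible onto `A` (Asmussen–Edwards characterization): for all pairwise
disjoint `X, Y, Z` with `X ⊆ A` and `Y ⊆ A`, if `Z` separates `X` from `Y`, then so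
does `Z ∩ A`. -/
def Collapsible {V : Type*} (G : SimpleGraph V) (A : Set V) : Prop :=
  ∀ X Y Z : Set V, X ⊆ A → Y ⊆ A → Disjoint X Y → Disjoint X Z → Disjoint Y Z →
    Separates G X Y Z → Separates G X Y (Z ∩ A)

/-- The neighbour set `N_G(W)`: vertices outside `W` adjacent in `G` to some vertex of `W`. -/
def nbhd {V : Type*} (G : SimpleGraph V) (W : Set V) : Set V :=
  {v | v ∉ W ∧ ∃ w ∈ W, G.Adj v w}

/-- `M` is the vertex set of a connected component of the induced subgraph `G_W`. -/
def IsCompOf {V : Type*} (G : SimpleGraph V) (W M : Set V) : Prop :=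
  ∃ c : (G.induce W).ConnectedComponent, M = Subtype.val '' c.supp

/-- A subset of `V` is complete in `G` if its vertices are pairwise adjacent. -/
def CompleteIn {V : Type*} (G : SimpleGraph V) (S : Set V) : Prop :=
  ∀ x ∈ S, ∀ y ∈ S, x ≠ y → G.Adj x y

/-- Theorem 1: `G` is collapsible onto `A` iff every minimal `xy`-separator, for every
pair of non-adjacent vertices `x, y ∈ A`, is contained in `A`. -/
theorem collapsible_iff_every_min_separator_subset
    {V : Type*} [Fintype V] (G : SimpleGraph V) (A : Set V) :
    Collapsible G A ↔
      ∀ x ∈ A, ∀ y ∈ A, x ≠ y → ¬ G.Adj x y →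
        ∀ S : Set V, IsMinSeparator G x y S → S ⊆ A := by
  constructor
  · -- forward
    intro hc x hx y hy hxy hadj S hS
    have hsep := hS.1
    have hxS : x ∉ S := fun h => (hsep.1 h) (Or.inl rfl)
    have hyS : y ∉ S := fun h => (hsep.1 h) (Or.inr rfl)
    have h2 : Separates G {x} {y} (S ∩ A) :=
      hc {x} {y} S (by simpa) (by simpa) (by simp [hxy])
        (by simp [hxS]) (by simp [hyS]) hsep.2
    have hsep2 : IsSeparator G x y (S ∩ A) :=
      ⟨(Set.inter_subset_left).trans hsep.1, h2⟩
    by_contra hSA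
    have hss : S ∩ A ⊂ S := by
      refine ⟨Set.inter_subset_left, fun hle => ?_⟩
      obtain ⟨s, hsS, hsA⟩ := Set.not_subset.1 hSA
      exact hsA (hle hsS).2
    exact hS.2 _ hss hsep2
  · -- backward
    intro h X Y Z hXA hYA hXY hXZ hYZ hsep
    intro a b ha hb p hp
    by_contra hcon
    push_neg at hcon
    have hab : a ≠ b := fun e => hXY.ne_of_mem ha hb e
    have haZ : a ∉ Z := fun h' => hXZ.ne_of_mem ha h' rfl
    have hbZ : b ∉ Z := fun h' => hYZ.ne_of_mem hb h' rfl
    -- a and b are non-adjacent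
    have hnadj : ¬ G.Adj a b := by
      intro hadj
      obtain ⟨s, hsZ, hsup⟩ := hsep ha hb (SimpleGraph.Walk.cons hadj SimpleGraph.Walk.nil)
        (by simp [SimpleGraph.Walk.isPath_def, hab])
      simp only [SimpleGraph.Walk.support_cons, SimpleGraph.Walk.support_nil,
        List.mem_cons, List.mem_singleton] at hsup
      rcases hsup with rfl | rfl | h'
      · exact haZ hsZ
      · exact hbZ hsZ
      · exact absurd h' List.not_mem_nil
    -- Z is an ab-separator
    have hZsep : IsSeparator G a b Z := by
      refine ⟨fun z hz hz' => ?_, fun a' b' ha' hb' q hq => ?_⟩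
      · rcases hz' with rfl | rfl
        · exact haZ hz
        · exact hbZ hz
      · rcases ha' with rfl; rcases hb' with rfl
        exact hsep ha hb q hq
    -- extract a minimal separator inside Z
    have hext : ∀ n (W : Set V), W.ncard = n → IsSeparator G a b W →
        ∃ S ⊆ W, IsMinSeparator G a b S := by
      intro n
      induction n using Nat.strong_induction_on with
      | _ n ih =>
        intro W hWn hW
        by_cases hmin : ∀ T ⊂ W, ¬ IsSeparator G a b T
        · exact ⟨W, subset_rfl, hW, hmin⟩
        · push_neg at hmin
          obtain ⟨T, hTW, hT⟩ := hmin
          have hlt : T.ncard < n := hWn ▸ Set.ncard_lt_ncard hTW (Set.toFinite W)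
          obtain ⟨S, hSW, hSmin⟩ := ih _ hlt T rfl hT
          exact ⟨S, hSW.trans hTW.subset, hSmin⟩
    obtain ⟨S, hSZ, hSmin⟩ := hext Z.ncard Z rfl hZsep
    have hSA : S ⊆ A := h a (hXA ha) b (hYA hb) hab hnadj S hSmin
    obtain ⟨s, hsS, hsup⟩ := hSmin.1.2 rfl rfl p hp
    exact hcon s ⟨hSZ hsS, hSA hsS⟩ hsup
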